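/- Prefix-exchange identity and optimal substructure (used in the proof of Lemma 5.4). Let G = (V,E,T,β) be an instantaneous temporal graph with cost functions c, c_λ : E → ℕ, vertex functions ind : V → {0,1}, A : V → ℕ, and coefficients δ1,…,δ7 ∈ ℚ with δ_i ≥ 0. Let P = (e_i)_{i=1}^k be a temporal walk from s to z with time stamps t_1,…,t_k, let 1 ≤ ℓ < k, let P_ℓ = (e_i)_{i=1}^ℓ be its prefix ending at vertex v_ℓ at time t_ℓ, and let S = (e_i)_{i=ℓ+1}^k be its suffix. Then for every temporal walk Q from s to v_ℓ whose last time stamp equals t_ℓ: (i) the concatenation Q·S is a temporal walk from s to z with last time stamp t_k; and (ii) val'(Q·S) − val'(P) = val'(Q) − val'(P_ℓ). Consequently, if P minimizes val' among all temporal walks from s to z whose last time stamp is t_k, then P_ℓ minimizes val' among all temporal walks from s to v_ℓ whose last time stamp is t_ℓ. -/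

import Mathlib

namespace TW

/-- A time-arc `(v, w, t, λ)` of a temporal graph: a directed connection
from `src` to `dst` with time stamp `ts` and transmission time `tt`. -/
structure TArc (V : Type*) where
  src : V
  dst : V
  ts : ℕ
  tt : ℕ
deriving DecidableEq

/-- A time-arc `(v, w, t)` of an instantaneous temporal graph. -/
structure IArc (V : Type*) where
  src : V
  dst : V
  ts : ℕ
deriving DecidableEq

variable {V : Type*}

/-- `ValidTG Vset T E af bf` expresses that `(Vset, E, T, af, bf)` is a temporal
graph: `E ⊆ V × V × {1,…,T} × {0,…,T}` and `af, bf : V → {0,…,T}`. -/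
def ValidTG (Vset : Finset V) (T : ℕ) (E : Finset (TArc V))
    (af bf : V → ℕ) : Prop :=
  (∀ e ∈ E, e.src ∈ Vset ∧ e.dst ∈ Vset ∧ 1 ≤ e.ts ∧ e.ts ≤ T ∧ e.tt ≤ T) ∧
    ∀ v, af v ≤ T ∧ bf v ≤ T

/-- Validity for an instantaneous temporal graph `(Vset, E, T, bf)`. -/
def ValidIG (Vset : Finset V) (T : ℕ) (E : Finset (IArc V))
    (bf : V → ℕ) : Prop :=
  (∀ e ∈ E, e.src ∈ Vset ∧ e.dst ∈ Vset ∧ 1 ≤ e.ts ∧ e.ts ≤ T) ∧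
    ∀ v, bf v ≤ T

/-- A temporal walk from `s` to `z` in the temporal graph with time-arc set `E`,
minimum waiting times `af`, and maximum waiting times `bf`:
a nonempty sequence `((v_{i-1}, v_i, t_i, λ_i))_{i=1}^k` of time-arcs of `E`
with `v_0 = s`, `v_k = z`, and
`t_i + λ_i + af v_i ≤ t_{i+1} ≤ t_i + λ_i + bf v_i` for all `i ∈ {1,…,k-1}`. -/
def IsTWalk (E : Finset (TArc V)) (af bf : V → ℕ) (s z : V)
    (P : List (TArc V)) : Prop :=
  P ≠ [] ∧ (∀ e ∈ P, e ∈ E) ∧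
    P.head?.map TArc.src = some s ∧ P.getLast?.map TArc.dst = some z ∧
    List.Chain' (fun e f => e.dst = f.src ∧
      e.ts + e.tt + af e.dst ≤ f.ts ∧ f.ts ≤ e.ts + e.tt + bf e.dst) P

/-- A temporal walk from `s` to `z` in an instantaneous temporal graph. -/
def IsIWalk (E : Finset (IArc V)) (bf : V → ℕ) (s z : V)
    (P : List (IArc V)) : Prop :=
  P ≠ [] ∧ (∀ e ∈ P, e ∈ E) ∧
    P.head?.map IArc.src = some s ∧ P.getLast?.map IArc.dst = some z ∧
    List.Chain' (fun e f => e.dst = f.src ∧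
      e.ts ≤ f.ts ∧ f.ts ≤ e.ts + bf e.dst) P

/-- The vertex sequence `v_0, v_1, …, v_k` of a walk. -/
def tVerts (P : List (TArc V)) : List V :=
  (P.head?.map TArc.src).toList ++ P.map TArc.dst

/-- The vertex sequence `v_0, v_1, …, v_k` of a walk (instantaneous case). -/
def iVerts (P : List (IArc V)) : List V :=
  (P.head?.map IArc.src).toList ++ P.map IArc.dst

/-- Departure time `t_1` of a walk. -/
def tFirst (P : List (TArc V)) : ℕ := (P.head?.map TArc.ts).getD 0

/-- Arrival time `t_k + λ_k` of a walk. -/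
def tLastArr (P : List (TArc V)) : ℕ :=
  (P.getLast?.map (fun e => e.ts + e.tt)).getD 0

/-- First time stamp `t_1` of an instantaneous walk. -/
def iFirst (P : List (IArc V)) : ℕ := (P.head?.map IArc.ts).getD 0

/-- Last time stamp `t_m` of an instantaneous walk. -/
def iLast (P : List (IArc V)) : ℕ := (P.getLast?.map IArc.ts).getD 0

/-- Total waiting time `∑_{i=1}^{k-1} (t_{i+1} - (t_i + λ_i))` of a walk. -/
def waitSum (P : List (TArc V)) : ℚ :=
  ((P.zip P.tail).map
    (fun ef => (ef.2.ts : ℚ) - ((ef.1.ts : ℚ) + (ef.1.tt : ℚ)))).sum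

/-- `val(P)`: the linear combination
`δ1·(t_k+λ_k) + δ2·(−t_1) + δ3·(t_k+λ_k−t_1) + δ4·Σλ_i + δ5·Σc(e_i) + δ6·k
 + δ7·Σ(t_{i+1}−(t_i+λ_i))`. -/
def val (c : TArc V → ℕ) (d1 d2 d3 d4 d5 d6 d7 : ℚ) (P : List (TArc V)) : ℚ :=
  d1 * (tLastArr P : ℚ) + d2 * (-(tFirst P : ℚ))
    + d3 * ((tLastArr P : ℚ) - (tFirst P : ℚ))
    + d4 * (P.map (fun e => (e.tt : ℚ))).sum
    + d5 * (P.map (fun e => (c e : ℚ))).sum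
    + d6 * (P.length : ℚ) + d7 * waitSum P

/-- `∑_{i=1}^{m-1} ((t_{i+1} − (t_i − A(v_i)))·ind(v_i))` for an instantaneous
walk, where `v_i` is the intermediate vertex between `e_i` and `e_{i+1}`. -/
def iWaitSum (ind A : V → ℕ) (P : List (IArc V)) : ℚ :=
  ((P.zip P.tail).map
    (fun ef => ((ef.2.ts : ℚ) - ((ef.1.ts : ℚ) - (A ef.1.dst : ℚ)))
      * (ind ef.1.dst : ℚ))).sum

/-- `val'(P)`: the adapted linear combination
`δ1·t_m + δ2·(−t_1) + δ3·(t_m−t_1) + δ4·Σc_λ(e_i) + δ5·Σc(e_i) + (δ6/2)·m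
 + δ7·Σ((t_{i+1}−(t_i−A(v_i)))·ind(v_i))` for instantaneous walks. -/
def val' (c cl : IArc V → ℕ) (ind A : V → ℕ) (d1 d2 d3 d4 d5 d6 d7 : ℚ)
    (P : List (IArc V)) : ℚ :=
  d1 * (iLast P : ℚ) + d2 * (-(iFirst P : ℚ))
    + d3 * ((iLast P : ℚ) - (iFirst P : ℚ))
    + d4 * (P.map (fun e => (cl e : ℚ))).sum
    + d5 * (P.map (fun e => (c e : ℚ))).sum
    + (d6 / 2) * (P.length : ℚ) + d7 * iWaitSum ind A P

section Transformation

variable [DecidableEq V]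

/-- The arcs `E^O = {(v, v_e, t) : e = (v,u,t,λ) ∈ E}` of Transformation 1. -/
def trEO (E : Finset (TArc V)) : Finset (IArc (V ⊕ TArc V)) :=
  E.image (fun e => ⟨Sum.inl e.src, Sum.inr e, e.ts⟩)

/-- The arcs `E^I = {(v_e, u, t+λ+α(u)) : e = (v,u,t,λ) ∈ E}`. -/
def trEI (af : V → ℕ) (E : Finset (TArc V)) : Finset (IArc (V ⊕ TArc V)) :=
  E.image (fun e => ⟨Sum.inr e, Sum.inl e.dst, e.ts + e.tt + af e.dst⟩)

/-- The arc set `E' = E^O ∪ E^I` of the transformed instantaneous graph. -/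
def trE (af : V → ℕ) (E : Finset (TArc V)) : Finset (IArc (V ⊕ TArc V)) :=
  trEO E ∪ trEI af E

/-- `β'`: `β' v = β v` for `v ∈ V` and `β' v_e = T` for arc vertices. -/
def trBeta (bf : V → ℕ) (T : ℕ) : V ⊕ TArc V → ℕ :=
  Sum.elim bf (fun _ => T)

/-- The transformed cost function `c'`. -/
def trC (c : TArc V → ℕ) : IArc (V ⊕ TArc V) → ℕ := fun e' =>
  match e'.src, e'.dst with
  | Sum.inl _, Sum.inr eh => c eh
  | _, _ => 0

/-- The transmission-cost function `c_λ`. -/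
def trCl : IArc (V ⊕ TArc V) → ℕ := fun e' =>
  match e'.src, e'.dst with
  | Sum.inr eh, Sum.inl _ => eh.tt
  | _, _ => 0

/-- The vertex-index function `ind`: `1` on original vertices, `0` else. -/
def trInd : V ⊕ TArc V → ℕ := Sum.elim (fun _ => 1) (fun _ => 0)

/-- The auxiliary function `A`: `A v = α v` on original vertices, `0` else. -/
def trA (af : V → ℕ) : V ⊕ TArc V → ℕ := Sum.elim af (fun _ => 0)

/-- The walk `P'` in `G'` corresponding to a walk `P` in `G`:
each arc `e = (v,u,t,λ)` is replaced by the two arcs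
`(v, v_e, t)` and `(v_e, u, t+λ+α(u))`. -/
def corr (af : V → ℕ) (P : List (TArc V)) : List (IArc (V ⊕ TArc V)) :=
  P.flatMap (fun e =>
    [⟨Sum.inl e.src, Sum.inr e, e.ts⟩,
     ⟨Sum.inr e, Sum.inl e.dst, e.ts + e.tt + af e.dst⟩])

end Transformation

lemma zip_tail_append {α : Type*} (a : α) (l s : List α) (hs : s ≠ []) :
    ((a :: l) ++ s).zip ((a :: l) ++ s).tail
      = (a :: l).zip (a :: l).tail
        ++ ((a :: l).getLast (by simp), s.head hs) :: s.zip s.tail := by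
  induction l generalizing a with
  | nil =>
      cases s with
      | nil => exact absurd rfl hs
      | cons b t => simp [List.zip]
  | cons c l ih =>
      have h := ih c
      simp only [List.cons_append, List.tail_cons, List.zip_cons_cons] at *
      rw [h]
      simp [List.getLast_cons]

lemma iWaitSum_append (ind A : V → ℕ) (Q S : List (IArc V))
    (hQ : Q ≠ []) (hS : S ≠ []) :
    iWaitSum ind A (Q ++ S) = iWaitSum ind A Q
      + (((S.head hS).ts : ℚ) - (((Q.getLast hQ).ts : ℚ)
          - (A (Q.getLast hQ).dst : ℚ))) * (ind (Q.getLast hQ).dst : ℚ)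
      + iWaitSum ind A S := by
  obtain ⟨a, Q', rfl⟩ := List.exists_cons_of_ne_nil hQ
  unfold iWaitSum
  rw [zip_tail_append a Q' S hS]
  simp [List.map_append]
  ring

lemma val'_append (c cl : IArc V → ℕ) (ind A : V → ℕ) (d1 d2 d3 d4 d5 d6 d7 : ℚ)
    (Q S : List (IArc V)) (hQ : Q ≠ []) (hS : S ≠ []) :
    val' c cl ind A d1 d2 d3 d4 d5 d6 d7 (Q ++ S)
      = val' c cl ind A d1 d2 d3 d4 d5 d6 d7 Q
        + (d1 + d3) * ((iLast S : ℚ) - ((Q.getLast hQ).ts : ℚ))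
        + d4 * (S.map (fun e => (cl e : ℚ))).sum
        + d5 * (S.map (fun e => (c e : ℚ))).sum
        + (d6 / 2) * (S.length : ℚ)
        + d7 * (iWaitSum ind A S
            + (((S.head hS).ts : ℚ) - (((Q.getLast hQ).ts : ℚ)
                - (A (Q.getLast hQ).dst : ℚ))) * (ind (Q.getLast hQ).dst : ℚ)) := by
  unfold val' iFirst iLast
  rw [List.head?_append_of_ne_nil _ hQ, List.getLast?_append_of_ne_nil _ hS,
    iWaitSum_append ind A Q S hQ hS, List.getLast?_eq_getLast hQ]
  simp [List.map_append]
  ring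



set_option maxHeartbeats 2000000 in
/-- **Prefix-exchange identity and optimal substructure (Lemma 5.4).**
Let `P` be a temporal walk from `s` to `z`, `1 ≤ ℓ < k`, with prefix
`P_ℓ = P.take ℓ` ending at vertex `v_ℓ` at time `t_ℓ` and suffix `S = P.drop ℓ`.
For every temporal walk `Q` from `s` to `v_ℓ` whose last time stamp is `t_ℓ`:
(i) `Q ++ S` is a temporal walk from `s` to `z` with last time stamp `t_k`, and
(ii) `val'(Q ++ S) − val'(P) = val'(Q) − val'(P_ℓ)`. Consequently, if `P`
minimizes `val'` among walks from `s` to `z` with last time stamp `t_k`, then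
`P_ℓ` minimizes `val'` among walks from `s` to `v_ℓ` with last time stamp `t_ℓ`. -/
theorem prefix_exchange_optimal_substructure
    {V : Type*} (Vset : Finset V) (T : ℕ) (E : Finset (IArc V)) (bf : V → ℕ)
    (hG : ValidIG Vset T E bf)
    (c cl : IArc V → ℕ) (ind A : V → ℕ) (hind : ∀ v, ind v = 0 ∨ ind v = 1)
    (d1 d2 d3 d4 d5 d6 d7 : ℚ)
    (h1 : 0 ≤ d1) (h2 : 0 ≤ d2) (h3 : 0 ≤ d3) (h4 : 0 ≤ d4)
    (h5 : 0 ≤ d5) (h6 : 0 ≤ d6) (h7 : 0 ≤ d7)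
    (s z : V) (P : List (IArc V)) (hP : IsIWalk E bf s z P)
    (l : ℕ) (hl1 : 1 ≤ l) (hl : l < P.length) :
    (∀ Q, IsIWalk E bf s ((P.get ⟨l - 1, by omega⟩).dst) Q →
      iLast Q = (P.get ⟨l - 1, by omega⟩).ts →
        (IsIWalk E bf s z (Q ++ P.drop l) ∧
          iLast (Q ++ P.drop l) = iLast P ∧
          val' c cl ind A d1 d2 d3 d4 d5 d6 d7 (Q ++ P.drop l)
              - val' c cl ind A d1 d2 d3 d4 d5 d6 d7 P =
            val' c cl ind A d1 d2 d3 d4 d5 d6 d7 Q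
              - val' c cl ind A d1 d2 d3 d4 d5 d6 d7 (P.take l))) ∧
    ((∀ R, IsIWalk E bf s z R → iLast R = iLast P →
        val' c cl ind A d1 d2 d3 d4 d5 d6 d7 P ≤
          val' c cl ind A d1 d2 d3 d4 d5 d6 d7 R) →
      ∀ R, IsIWalk E bf s ((P.get ⟨l - 1, by omega⟩).dst) R →
        iLast R = (P.get ⟨l - 1, by omega⟩).ts →
          val' c cl ind A d1 d2 d3 d4 d5 d6 d7 (P.take l) ≤
            val' c cl ind A d1 d2 d3 d4 d5 d6 d7 R) := by
  obtain ⟨hPne, hPE, hPhead, hPlast, hPchain⟩ := hP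
  have hTne : P.take l ≠ [] := by
    intro h
    have : (P.take l).length = 0 := by rw [h]; rfl
    rw [List.length_take] at this
    omega
  have hSne : P.drop l ≠ [] := by
    intro h
    have : (P.drop l).length = 0 := by rw [h]; rfl
    rw [List.length_drop] at this
    omega
  have hTlast? : (P.take l).getLast? = some (P.get ⟨l - 1, by omega⟩) := by
    rw [List.getLast?_eq_getElem?]
    have hlen : (P.take l).length = l := by rw [List.length_take]; omega
    rw [hlen, List.getElem?_take, if_pos (by omega),
      List.getElem?_eq_getElem (by omega)]
    simp [List.get_eq_getElem]
  have hShead? : (P.drop l).head? = some (P.get ⟨l, hl⟩) := by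
    rw [List.head?_drop, List.getElem?_eq_getElem hl]
    simp [List.get_eq_getElem]
  have hidx : l - 1 + 1 = l := by omega
  have hseam := List.isChain_iff_getElem.mp hPchain (l - 1) (by omega)
  simp only [hidx] at hseam
  have hTgetLast : (P.take l).getLast hTne = P.get ⟨l - 1, by omega⟩ := by
    have h := List.getLast?_eq_getLast (l := P.take l) hTne
    rw [hTlast?] at h
    exact (Option.some_inj.mp h).symm
  have hTiLast : iLast (P.take l) = (P.get ⟨l - 1, by omega⟩).ts := by
    unfold iLast; rw [hTlast?]; rfl
  have hPsplit : P.take l ++ P.drop l = P := List.take_append_drop l P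
  have hPdropLast : (P.drop l).getLast?.map IArc.dst = some z := by
    have h2 : (P.take l ++ P.drop l).getLast? = (P.drop l).getLast? :=
      List.getLast?_append_of_ne_nil _ hSne
    rw [hPsplit] at h2
    rw [← h2]; exact hPlast
  have hiLastP : iLast (P.drop l) = iLast P := by
    unfold iLast
    conv_rhs => rw [← hPsplit]
    rw [List.getLast?_append_of_ne_nil _ hSne]
  have main : ∀ Q, IsIWalk E bf s ((P.get ⟨l - 1, by omega⟩).dst) Q →
      iLast Q = (P.get ⟨l - 1, by omega⟩).ts →
        (IsIWalk E bf s z (Q ++ P.drop l) ∧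
          iLast (Q ++ P.drop l) = iLast P ∧
          val' c cl ind A d1 d2 d3 d4 d5 d6 d7 (Q ++ P.drop l)
              - val' c cl ind A d1 d2 d3 d4 d5 d6 d7 P =
            val' c cl ind A d1 d2 d3 d4 d5 d6 d7 Q
              - val' c cl ind A d1 d2 d3 d4 d5 d6 d7 (P.take l)) := by
    intro Q hQ hQl
    obtain ⟨hQne, hQE, hQhead, hQlast, hQchain⟩ := hQ
    have hQlastDst : (Q.getLast hQne).dst = (P.get ⟨l - 1, by omega⟩).dst := by
      rw [List.getLast?_eq_getLast hQne] at hQlast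
      simpa using hQlast
    have hQlastTs : (Q.getLast hQne).ts = (P.get ⟨l - 1, by omega⟩).ts := by
      unfold iLast at hQl
      rw [List.getLast?_eq_getLast hQne] at hQl
      simpa using hQl
    have hwalk : IsIWalk E bf s z (Q ++ P.drop l) := by
      refine ⟨by simp [hQne], ?_, ?_, ?_, ?_⟩
      · intro e he
        rcases List.mem_append.mp he with h | h
        · exact hQE e h
        · exact hPE e ((List.drop_suffix l P).subset h)
      · rw [List.head?_append_of_ne_nil _ hQne]; exact hQhead
      · rw [List.getLast?_append_of_ne_nil _ hSne]; exact hPdropLast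
      · rw [List.Chain', List.isChain_append]
        refine ⟨hQchain, hPchain.suffix (List.drop_suffix l P), ?_⟩
        intro x hx y hy
        rw [List.getLast?_eq_getLast hQne] at hx
        rw [hShead?] at hy
        simp only [Option.mem_def, Option.some_inj] at hx hy
        subst hx; subst hy
        exact ⟨by rw [hQlastDst]; exact hseam.1,
          by rw [hQlastTs]; exact hseam.2.1,
          by rw [hQlastTs, hQlastDst]; exact hseam.2.2⟩
    have hlastEq : iLast (Q ++ P.drop l) = iLast P := by
      rw [← hiLastP]
      unfold iLast
      rw [List.getLast?_append_of_ne_nil _ hSne]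
    refine ⟨hwalk, hlastEq, ?_⟩
    have hv1 := val'_append c cl ind A d1 d2 d3 d4 d5 d6 d7 Q (P.drop l) hQne hSne
    have hv2 := val'_append c cl ind A d1 d2 d3 d4 d5 d6 d7 (P.take l) (P.drop l)
      hTne hSne
    rw [hPsplit, hTgetLast] at hv2
    rw [hQlastTs, hQlastDst] at hv1
    linarith
  refine ⟨main, ?_⟩
  intro hopt R hR hRl
  obtain ⟨hwalk, hlastEq, hvalEq⟩ := main R hR hRl
  have := hopt _ hwalk hlastEq
  linarith

end TW
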